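/- Let E be a row-finite directed graph. Then the sequence of abelian groups 0 → ℤ[σ,σ⁻¹]^{(reg(E))} → ℤ[σ,σ⁻¹]^{(E⁰)} → BF_gr(E) → 0, where the first map is given by the matrix I − σA_E^t and the second is the canonical projection onto the cokernel, is pure exact: it is exact and remains exact after tensoring over ℤ with any abelian group. -/

import Mathlib

/-- The `w`-th column of the matrix `I - σ·A_E^t`, as an element of the direct sum
`ℤ[σ,σ⁻¹]^{(E⁰)}`: it is `χ_w - σ·∑_{e : s(e)=w} χ_{r(e)}`. -/
noncomputable def bfCol {V Ed : Type} (s r : Ed → V) (w : V) :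
    V →₀ LaurentPolynomial ℤ :=
  Finsupp.single w 1 -
    (LaurentPolynomial.T 1 : LaurentPolynomial ℤ) •
      ∑ᶠ e : {e : Ed // s e = w}, Finsupp.single (r e.1) (1 : LaurentPolynomial ℤ)

/-- The map `I - σ·A_E^t : ℤ[σ,σ⁻¹]^{(reg(E))} → ℤ[σ,σ⁻¹]^{(E⁰)}` on direct sums. -/
noncomputable def bfMap {V Ed : Type} (s r : Ed → V) :
    ({v : V // ∃ e, s e = v} →₀ LaurentPolynomial ℤ) →ₗ[LaurentPolynomial ℤ]
      (V →₀ LaurentPolynomial ℤ) :=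
  Finsupp.linearCombination (LaurentPolynomial ℤ) (fun w : {v : V // ∃ e, s e = v} => bfCol s r w.1)

open TensorProduct

noncomputable def bfTheta (W M : Type) [AddCommGroup M] :
    @LinearEquiv ℤ ℤ _ _ (RingHom.id ℤ) (RingHom.id ℤ) _ _ ((W →₀ LaurentPolynomial ℤ) ⊗[ℤ] M)
      (W →₀ (ℤ →₀ M)) _ _ TensorProduct.instModule _ := by
  classical
  exact (TensorProduct.finsuppLeft ℤ ℤ (LaurentPolynomial ℤ) M W).trans
    (Finsupp.mapRange.linearEquiv
      (((AddMonoidAlgebra.coeffLinearEquiv ℤ).rTensor M).trans (finsuppScalarLeft ℤ M ℤ)))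

lemma bfTheta_symm_single (W M : Type) [AddCommGroup M] (w : W) (n : ℤ) (m : M) :
    (bfTheta W M).symm (Finsupp.single w (Finsupp.single n m)) =
      (Finsupp.single w (LaurentPolynomial.T n) : W →₀ LaurentPolynomial ℤ) ⊗ₜ[ℤ] m := by
  classical
  simp [bfTheta, LinearEquiv.trans_symm, AddMonoidAlgebra.coeffLinearEquiv_symm_apply, Finsupp.mapRange.linearEquiv_symm,
    TensorProduct.finsuppScalarLeft_symm_apply_single,
    TensorProduct.finsuppLeft_symm_apply_single]

lemma bfTheta_single (W M : Type) [AddCommGroup M] (w : W) (n : ℤ) (m : M) :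
    bfTheta W M ((Finsupp.single w (LaurentPolynomial.T n) : W →₀ LaurentPolynomial ℤ) ⊗ₜ[ℤ] m)
      = Finsupp.single w (Finsupp.single n m) := by
  rw [← bfTheta_symm_single, LinearEquiv.apply_symm_apply]

lemma bfMap_single {V Ed : Type} (s r : Ed → V) [∀ v, Fintype {e : Ed // s e = v}]
    (w : {v : V // ∃ e, s e = v}) (n : ℤ) :
    bfMap s r (Finsupp.single w (LaurentPolynomial.T n)) =
      Finsupp.single w.1 (LaurentPolynomial.T n)
        - ∑ e : {e : Ed // s e = w.1}, Finsupp.single (r e.1) (LaurentPolynomial.T (n + 1)) := by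
  rw [bfMap, Finsupp.linearCombination_single, bfCol, finsum_eq_sum_of_fintype]
  rw [smul_sub, smul_smul, ← LaurentPolynomial.T_add, Finset.smul_sum]
  simp [Finsupp.smul_single, ← LaurentPolynomial.T_add]

noncomputable def bfEval (W M : Type) [AddCommGroup M] (n : ℤ) :
    (W →₀ (ℤ →₀ M)) →ₗ[ℤ] (W →₀ M) :=
  Finsupp.mapRange.linearMap (Finsupp.lapply n)

lemma bfEval_single (W M : Type) [AddCommGroup M] (n : ℤ) (w : W) (t : ℤ →₀ M) :
    bfEval W M n (Finsupp.single w t) = Finsupp.single w (t n) := by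
  simp [bfEval]

noncomputable def bfA {V Ed : Type} (s r : Ed → V) [∀ v, Fintype {e : Ed // s e = v}]
    (M : Type) [AddCommGroup M] :
    ({v : V // ∃ e, s e = v} →₀ M) →ₗ[ℤ] (V →₀ M) :=
  Finsupp.lsum ℤ (fun w => ∑ e : {e : Ed // s e = w.1}, Finsupp.lsingle (r e.1))

noncomputable def bfJ {V Ed : Type} (s : Ed → V) (M : Type) [AddCommGroup M] :
    ({v : V // ∃ e, s e = v} →₀ M) →ₗ[ℤ] (V →₀ M) :=
  Finsupp.lmapDomain M ℤ Subtype.val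

lemma bf_key {V Ed : Type} (s r : Ed → V) [∀ v, Fintype {e : Ed // s e = v}]
    (M : Type) [AddCommGroup M] (n : ℤ) :
    (bfEval V M n) ∘ₗ (bfTheta V M).toLinearMap
        ∘ₗ (LinearMap.rTensor M (LinearMap.restrictScalars ℤ (bfMap s r)))
        ∘ₗ (bfTheta {v : V // ∃ e, s e = v} M).symm.toLinearMap
      = bfJ s M ∘ₗ bfEval {v : V // ∃ e, s e = v} M n
          - bfA s r M ∘ₗ bfEval {v : V // ∃ e, s e = v} M (n - 1) := by
  apply Finsupp.lhom_ext' ; intro w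
  apply Finsupp.lhom_ext' ; intro k
  apply LinearMap.ext ; intro m
  simp only [LinearMap.comp_apply, LinearMap.sub_apply, Finsupp.lsingle_apply,
    LinearEquiv.coe_coe, bfTheta_symm_single, LinearMap.rTensor_tmul,
    LinearMap.restrictScalars_apply, bfMap_single, TensorProduct.sub_tmul,
    TensorProduct.sum_tmul, map_sub, map_sum, bfTheta_single, bfEval_single]
  have hkn : (k + 1 = n) = (k = n - 1) := by
    apply propext; omega
  simp only [Finsupp.single_apply, hkn, bfJ, bfA, Finsupp.lmapDomain_apply,
    Finsupp.mapDomain_single, Finsupp.lsum_single, LinearMap.sum_apply,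
    Finsupp.lsingle_apply]


lemma bf_rTensor_inj {V Ed : Type} (s r : Ed → V) [∀ v, Fintype {e : Ed // s e = v}]
    (M : Type) [AddCommGroup M] :
    Function.Injective (LinearMap.rTensor (R := ℤ) M (LinearMap.restrictScalars ℤ (bfMap s r))) := by
  classical
  set f := LinearMap.rTensor (R := ℤ) M (LinearMap.restrictScalars ℤ (bfMap s r)) with hf
  have key : ∀ x, f x = 0 → x = 0 := by
    intro x hx
    set y := bfTheta {v : V // ∃ e, s e = v} M x with hy
    by_contra hx0
    have hy0 : y ≠ 0 := by
      simp only [hy, ne_eq, EmbeddingLike.map_eq_zero_iff]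
      exact hx0
    set T : Finset ℤ := y.support.biUnion (fun w => (y w).support) with hT
    have hTne : T.Nonempty := by
      obtain ⟨w, hw⟩ : ∃ w, y w ≠ 0 := by
        by_contra h
        push_neg at h
        exact hy0 (Finsupp.ext h)
      obtain ⟨k, hk⟩ : ∃ k, y w k ≠ 0 := by
        by_contra h
        push_neg at h
        exact hw (Finsupp.ext h)
      exact ⟨k, Finset.mem_biUnion.mpr ⟨w, Finsupp.mem_support_iff.mpr hw,
        Finsupp.mem_support_iff.mpr hk⟩⟩
    set n₀ := T.min' hTne with hn₀
    have heval : ∀ (n : ℤ) (w : {v : V // ∃ e, s e = v}),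
        bfEval {v : V // ∃ e, s e = v} M n y w = y w n := by
      intro n w
      simp [bfEval, Finsupp.mapRange.linearMap_apply, Finsupp.mapRange_apply]
    have h2 : bfEval {v : V // ∃ e, s e = v} M (n₀ - 1) y = 0 := by
      ext w
      rw [heval]
      by_contra h
      have hw : y w ≠ 0 := fun h0 => h (by rw [h0]; rfl)
      have : (n₀ - 1) ∈ T := Finset.mem_biUnion.mpr
        ⟨w, Finsupp.mem_support_iff.mpr hw, Finsupp.mem_support_iff.mpr h⟩
      have := T.min'_le _ this
      omega
    have h1 : bfEval {v : V // ∃ e, s e = v} M n₀ y ≠ 0 := by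
      have hn₀T : n₀ ∈ T := T.min'_mem hTne
      obtain ⟨w, hw, hk⟩ := Finset.mem_biUnion.mp hn₀T
      intro h0
      have := heval n₀ w
      rw [h0] at this
      exact Finsupp.mem_support_iff.mp hk this.symm
    have hkey := LinearMap.congr_fun (bf_key s r M n₀) y
    simp only [LinearMap.comp_apply, LinearMap.sub_apply, LinearEquiv.coe_coe] at hkey
    rw [show (bfTheta {v : V // ∃ e, s e = v} M).symm y = x from by
        rw [hy, LinearEquiv.symm_apply_apply], hx, map_zero, map_zero, h2, map_zero,
      sub_zero] at hkey
    have hJ : Function.Injective (bfJ (Ed := Ed) s M) :=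
      Finsupp.mapDomain_injective Subtype.val_injective
    exact h1 (hJ (by rw [← hkey, map_zero]))
  intro a b hab
  have h0 : f (a - b) = 0 := by rw [map_sub, hab, sub_self]
  exact sub_eq_zero.mp (key _ h0)

/-- For a row-finite graph `E`, the sequence
`0 → ℤ[σ,σ⁻¹]^{(reg E)} → ℤ[σ,σ⁻¹]^{(E⁰)} → BF_gr(E) → 0`, with first map `I - σA_E^t`
and second map the projection onto the cokernel, is pure exact: it is exact (the first
map is injective, the projection is surjective, and the image of the first map is the
kernel of the projection), and it stays exact after tensoring over `ℤ` with any abelian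
group (by right exactness of the tensor product it suffices that the first map stays
injective after applying `- ⊗_ℤ M` for every abelian group `M`). -/
theorem stmt_1 {V Ed : Type} (s r : Ed → V)
    (hrow : ∀ v : V, Finite {e : Ed // s e = v}) :
    Function.Injective (bfMap s r) ∧
    Function.Surjective (Submodule.mkQ (LinearMap.range (bfMap s r))) ∧
    Function.Exact (bfMap s r) (Submodule.mkQ (LinearMap.range (bfMap s r))) ∧
    ∀ (M : Type) [AddCommGroup M],
      Function.Injective
        (LinearMap.rTensor (R := ℤ) M (LinearMap.restrictScalars ℤ (bfMap s r))) := by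
  haveI : ∀ v : V, Fintype {e : Ed // s e = v} := fun v => @Fintype.ofFinite _ (hrow v)
  have h4 : ∀ (M : Type) [AddCommGroup M], Function.Injective
      (LinearMap.rTensor (R := ℤ) M (LinearMap.restrictScalars ℤ (bfMap s r))) :=
    fun M _ => bf_rTensor_inj s r M
  refine ⟨?_, Submodule.mkQ_surjective _, LinearMap.exact_map_mkQ_range _, h4⟩
  intro a b hab
  have h := h4 ℤ
  have heq : (LinearMap.rTensor (R := ℤ) ℤ (LinearMap.restrictScalars ℤ (bfMap s r)))
        (a ⊗ₜ[ℤ] (1 : ℤ))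
      = (LinearMap.rTensor (R := ℤ) ℤ (LinearMap.restrictScalars ℤ (bfMap s r)))
        (b ⊗ₜ[ℤ] (1 : ℤ)) := by
    simp only [LinearMap.rTensor_tmul, LinearMap.restrictScalars_apply, hab]
  have h2 := h heq
  have h3 := congrArg (TensorProduct.rid ℤ _) h2
  simpa using h3
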